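/- Fix n ≥ 1 and regard the orthogonal group O(n) as a metric space, as a subset of the n×n real matrices with a norm-induced metric. Let G ⊆ O(n) be a closed subgroup, let (G_j) be a sequence of subgroups of O(n), and let H ⊆ O(n) be a subgroup such that the Hausdorff distance between G_j and H tends to 0 as j → ∞. Suppose the orbit decompositions of the unit sphere S^{n−1} ⊆ ℝⁿ converge uniformly: for every ε > 0 there exists N such that for all j ≥ N and all x ∈ S^{n−1} the Hausdorff distance between the orbits G_j·x = {g x | g ∈ G_j} and G·x = {g x | g ∈ G} is at most ε. Then H leaves every G-orbit on the unit sphere invariant: for every h ∈ H and every x ∈ S^{n−1}, h·x ∈ G·x. -/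

import Mathlib

-- Equip square real matrices with the Frobenius norm (a norm-induced metric).
attribute [local instance] Matrix.frobeniusNormedAddCommGroup

/-- The action of an `n × n` matrix on Euclidean space `ℝⁿ` by matrix-vector
multiplication. -/
noncomputable def matAct {n : ℕ} (g : Matrix (Fin n) (Fin n) ℝ)
    (x : EuclideanSpace ℝ (Fin n)) : EuclideanSpace ℝ (Fin n) :=
  (WithLp.equiv 2 (Fin n → ℝ)).symm (g.mulVec (WithLp.equiv 2 (Fin n → ℝ) x))

/-- The orbit of a point `x ∈ ℝⁿ` under a subgroup of the orthogonal group `O(n)`. -/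
noncomputable def orbitSet {n : ℕ} (G : Subgroup (Matrix.orthogonalGroup (Fin n) ℝ))
    (x : EuclideanSpace ℝ (Fin n)) : Set (EuclideanSpace ℝ (Fin n)) :=
  {y | ∃ g ∈ G, matAct ((g : Matrix.orthogonalGroup (Fin n) ℝ) : Matrix (Fin n) (Fin n) ℝ) x = y}

attribute [local instance] Matrix.frobeniusNormedSpace

lemma matAct_norm_le {n : ℕ} (A : Matrix (Fin n) (Fin n) ℝ) (x : EuclideanSpace ℝ (Fin n)) :
    ‖matAct A x‖ ≤ ‖A‖ * ‖x‖ := by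
  have h1 : ‖matAct A x‖ = ‖Matrix.replicateCol Unit (A.mulVec (WithLp.equiv 2 (Fin n → ℝ) x))‖ :=
    (Matrix.frobenius_norm_replicateCol _).symm
  have h2 : ‖x‖ = ‖Matrix.replicateCol Unit ((WithLp.equiv 2 (Fin n → ℝ)) x)‖ := by
    rw [Matrix.frobenius_norm_replicateCol]; simp
  rw [h1, h2, Matrix.replicateCol_mulVec]
  exact Matrix.frobenius_norm_mul _ _

lemma matAct_sub {n : ℕ} (A B : Matrix (Fin n) (Fin n) ℝ) (x : EuclideanSpace ℝ (Fin n)) :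
    matAct (A - B) x = matAct A x - matAct B x := by
  simp [matAct, Matrix.sub_mulVec]

lemma matAct_dist_le {n : ℕ} (A B : Matrix (Fin n) (Fin n) ℝ) (x : EuclideanSpace ℝ (Fin n)) :
    dist (matAct A x) (matAct B x) ≤ dist A B * ‖x‖ := by
  rw [dist_eq_norm, dist_eq_norm, ← matAct_sub]
  exact matAct_norm_le _ _

lemma norm_orthogonal_le {n : ℕ} (g : Matrix.orthogonalGroup (Fin n) ℝ) :
    ‖(g : Matrix (Fin n) (Fin n) ℝ)‖ ≤ (n : ℝ) + 1 := by
  have hg : star (g : Matrix (Fin n) (Fin n) ℝ) * g = 1 :=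
    (Matrix.mem_orthogonalGroup_iff' (Fin n) ℝ).mp g.2
  have hsum : ∀ j, ∑ i, ((g : Matrix (Fin n) (Fin n) ℝ) i j) ^ 2 = 1 := by
    intro j
    have := congrArg (fun M => M j j) hg
    simp only [Matrix.mul_apply, Matrix.one_apply_eq, Matrix.star_apply, star_trivial] at this
    calc ∑ i, ((g : Matrix (Fin n) (Fin n) ℝ) i j) ^ 2
        = ∑ i, (g : Matrix (Fin n) (Fin n) ℝ) i j * (g : Matrix (Fin n) (Fin n) ℝ) i j := by
          refine Finset.sum_congr rfl fun i _ => by ring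
      _ = 1 := this
  have hnorm : ‖(g : Matrix (Fin n) (Fin n) ℝ)‖ = ((n : ℝ)) ^ ((1 : ℝ) / 2) := by
    rw [Matrix.frobenius_norm_def, Finset.sum_comm]
    simp [Real.rpow_two, sq_abs, hsum]
  rw [hnorm]
  rcases Nat.eq_zero_or_pos n with h0 | hpos
  · simp [h0]
  · calc ((n : ℝ)) ^ ((1 : ℝ) / 2) ≤ ((n : ℝ)) ^ (1 : ℝ) := by
          apply Real.rpow_le_rpow_of_exponent_le
          · exact_mod_cast hpos
          · norm_num
    _ = (n : ℝ) := Real.rpow_one _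
    _ ≤ (n : ℝ) + 1 := by linarith

lemma coe_image_bounded {n : ℕ} (S : Set (Matrix.orthogonalGroup (Fin n) ℝ)) :
    Bornology.IsBounded
      ((fun g : Matrix.orthogonalGroup (Fin n) ℝ => (g : Matrix (Fin n) (Fin n) ℝ)) '' S) := by
  apply Bornology.IsBounded.subset (Metric.isBounded_closedBall (x := (0 : Matrix (Fin n) (Fin n) ℝ))
    (r := (n : ℝ) + 1))
  rintro _ ⟨g, -, rfl⟩
  simpa [Metric.mem_closedBall, dist_eq_norm] using norm_orthogonal_le g

lemma orbit_bounded {n : ℕ} (G : Subgroup (Matrix.orthogonalGroup (Fin n) ℝ))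
    (x : EuclideanSpace ℝ (Fin n)) : Bornology.IsBounded (orbitSet G x) := by
  apply Bornology.IsBounded.subset (Metric.isBounded_closedBall
    (x := (0 : EuclideanSpace ℝ (Fin n))) (r := ((n : ℝ) + 1) * ‖x‖))
  rintro _ ⟨g, -, rfl⟩
  simp only [Metric.mem_closedBall, dist_zero_right]
  calc ‖matAct (↑↑g) x‖ ≤ ‖((g : Matrix.orthogonalGroup (Fin n) ℝ) : Matrix (Fin n) (Fin n) ℝ)‖ * ‖x‖ :=
        matAct_norm_le _ _
    _ ≤ ((n : ℝ) + 1) * ‖x‖ := by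
        have := norm_orthogonal_le (g : Matrix.orthogonalGroup (Fin n) ℝ)
        exact mul_le_mul_of_nonneg_right this (norm_nonneg _)

lemma orbit_nonempty {n : ℕ} (G : Subgroup (Matrix.orthogonalGroup (Fin n) ℝ))
    (x : EuclideanSpace ℝ (Fin n)) : (orbitSet G x).Nonempty :=
  ⟨matAct ((1 : Matrix.orthogonalGroup (Fin n) ℝ) : Matrix (Fin n) (Fin n) ℝ) x, 1, G.one_mem, rfl⟩

lemma orbit_isClosed {n : ℕ} (G : Subgroup (Matrix.orthogonalGroup (Fin n) ℝ))
    (hGclosed : IsClosed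
      ((fun g : Matrix.orthogonalGroup (Fin n) ℝ => (g : Matrix (Fin n) (Fin n) ℝ)) ''
        (G : Set (Matrix.orthogonalGroup (Fin n) ℝ))))
    (x : EuclideanSpace ℝ (Fin n)) : IsClosed (orbitSet G x) := by
  have hS : IsCompact
      ((fun g : Matrix.orthogonalGroup (Fin n) ℝ => (g : Matrix (Fin n) (Fin n) ℝ)) ''
        (G : Set (Matrix.orthogonalGroup (Fin n) ℝ))) :=
    Metric.isCompact_of_isClosed_isBounded hGclosed (coe_image_bounded _)
  have hcont : Continuous fun A : Matrix (Fin n) (Fin n) ℝ => matAct A x := by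
    apply LipschitzWith.continuous (K := ‖x‖₊)
    apply LipschitzWith.of_dist_le_mul
    intro A B
    calc dist (matAct A x) (matAct B x) ≤ dist A B * ‖x‖ := matAct_dist_le _ _ _
      _ = ‖x‖₊ * dist A B := by rw [coe_nnnorm, mul_comm]
  have himg : orbitSet G x = (fun A : Matrix (Fin n) (Fin n) ℝ => matAct A x) ''
      ((fun g : Matrix.orthogonalGroup (Fin n) ℝ => (g : Matrix (Fin n) (Fin n) ℝ)) ''
        (G : Set (Matrix.orthogonalGroup (Fin n) ℝ))) := by
    ext y
    constructor
    · rintro ⟨g, hg, rfl⟩; exact ⟨_, ⟨g, hg, rfl⟩, rfl⟩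
    · rintro ⟨_, ⟨g, hg, rfl⟩, rfl⟩; exact ⟨g, hg, rfl⟩
  rw [himg]
  exact (hS.image hcont).isClosed

theorem limit_group_preserves_orbits (n : ℕ) (hn : 1 ≤ n)
    (G : Subgroup (Matrix.orthogonalGroup (Fin n) ℝ))
    (hGclosed : IsClosed
      ((fun g : Matrix.orthogonalGroup (Fin n) ℝ => (g : Matrix (Fin n) (Fin n) ℝ)) ''
        (G : Set (Matrix.orthogonalGroup (Fin n) ℝ))))
    (Gj : ℕ → Subgroup (Matrix.orthogonalGroup (Fin n) ℝ))
    (H : Subgroup (Matrix.orthogonalGroup (Fin n) ℝ))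
    (hconv : Filter.Tendsto (fun j => Metric.hausdorffDist
        ((fun g : Matrix.orthogonalGroup (Fin n) ℝ => (g : Matrix (Fin n) (Fin n) ℝ)) ''
          (Gj j : Set (Matrix.orthogonalGroup (Fin n) ℝ)))
        ((fun g : Matrix.orthogonalGroup (Fin n) ℝ => (g : Matrix (Fin n) (Fin n) ℝ)) ''
          (H : Set (Matrix.orthogonalGroup (Fin n) ℝ))))
      Filter.atTop (nhds 0))
    (horb : ∀ ε : ℝ, 0 < ε → ∃ N : ℕ, ∀ j ≥ N, ∀ x : EuclideanSpace ℝ (Fin n), ‖x‖ = 1 →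
      Metric.hausdorffDist (orbitSet (Gj j) x) (orbitSet G x) ≤ ε) :
    ∀ h ∈ H, ∀ x : EuclideanSpace ℝ (Fin n), ‖x‖ = 1 →
      matAct ((h : Matrix.orthogonalGroup (Fin n) ℝ) : Matrix (Fin n) (Fin n) ℝ) x
        ∈ orbitSet G x := by
  intro h hh x hx
  have hclosed := orbit_isClosed G hGclosed x
  rw [← hclosed.closure_eq]
  rw [Metric.mem_closure_iff]
  intro ε hε
  -- choose N for orbit convergence with ε/4
  obtain ⟨N, hN⟩ := horb (ε / 4) (by linarith)
  -- eventually hausdorffDist (Gj j) H < ε/4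
  have hev : ∀ᶠ j in Filter.atTop, Metric.hausdorffDist
      ((fun g : Matrix.orthogonalGroup (Fin n) ℝ => (g : Matrix (Fin n) (Fin n) ℝ)) ''
        (Gj j : Set (Matrix.orthogonalGroup (Fin n) ℝ)))
      ((fun g : Matrix.orthogonalGroup (Fin n) ℝ => (g : Matrix (Fin n) (Fin n) ℝ)) ''
        (H : Set (Matrix.orthogonalGroup (Fin n) ℝ))) < ε / 4 := by
    have : Set.Iio (ε / 4) ∈ nhds (0 : ℝ) := Iio_mem_nhds (by linarith)
    exact hconv.eventually this
  obtain ⟨N', hN'⟩ := Filter.eventually_atTop.mp hev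
  set j := max N N' with hj
  have hj1 : N ≤ j := le_max_left _ _
  have hj2 : N' ≤ j := le_max_right _ _
  have hdistGH := hN' j hj2
  -- group sets nonempty and bounded
  have hne1 : ((fun g : Matrix.orthogonalGroup (Fin n) ℝ => (g : Matrix (Fin n) (Fin n) ℝ)) ''
      (Gj j : Set (Matrix.orthogonalGroup (Fin n) ℝ))).Nonempty :=
    ⟨_, 1, (Gj j).one_mem, rfl⟩
  have hne2 : ((fun g : Matrix.orthogonalGroup (Fin n) ℝ => (g : Matrix (Fin n) (Fin n) ℝ)) ''
      (H : Set (Matrix.orthogonalGroup (Fin n) ℝ))).Nonempty :=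
    ⟨_, 1, H.one_mem, rfl⟩
  have hfin : EMetric.hausdorffEdist
      ((fun g : Matrix.orthogonalGroup (Fin n) ℝ => (g : Matrix (Fin n) (Fin n) ℝ)) ''
        (Gj j : Set (Matrix.orthogonalGroup (Fin n) ℝ)))
      ((fun g : Matrix.orthogonalGroup (Fin n) ℝ => (g : Matrix (Fin n) (Fin n) ℝ)) ''
        (H : Set (Matrix.orthogonalGroup (Fin n) ℝ))) ≠ ⊤ :=
    Metric.hausdorffEdist_ne_top_of_nonempty_of_bounded hne1 hne2
      (coe_image_bounded _) (coe_image_bounded _)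
  -- find g in Gj j close to h
  have hmem : ((h : Matrix.orthogonalGroup (Fin n) ℝ) : Matrix (Fin n) (Fin n) ℝ) ∈
      ((fun g : Matrix.orthogonalGroup (Fin n) ℝ => (g : Matrix (Fin n) (Fin n) ℝ)) ''
        (H : Set (Matrix.orthogonalGroup (Fin n) ℝ))) := ⟨h, hh, rfl⟩
  obtain ⟨gm, hgm, hdg⟩ := Metric.exists_dist_lt_of_hausdorffDist_lt' hmem hdistGH hfin
  obtain ⟨g, hgmem, rfl⟩ := hgm
  -- g • x close to h • x
  have hd1 : dist (matAct ((g : Matrix.orthogonalGroup (Fin n) ℝ) : Matrix (Fin n) (Fin n) ℝ) x)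
      (matAct ((h : Matrix.orthogonalGroup (Fin n) ℝ) : Matrix (Fin n) (Fin n) ℝ) x) < ε / 4 := by
    have h1 := matAct_dist_le ((g : Matrix.orthogonalGroup (Fin n) ℝ) : Matrix (Fin n) (Fin n) ℝ)
      ((h : Matrix.orthogonalGroup (Fin n) ℝ) : Matrix (Fin n) (Fin n) ℝ) x
    rw [hx, mul_one] at h1
    exact lt_of_le_of_lt h1 hdg
  -- orbit hausdorff distance
  have horbj := hN j hj1 x hx
  have hfin2 : EMetric.hausdorffEdist (orbitSet (Gj j) x) (orbitSet G x) ≠ ⊤ :=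
    Metric.hausdorffEdist_ne_top_of_nonempty_of_bounded (orbit_nonempty _ _) (orbit_nonempty _ _)
      (orbit_bounded _ _) (orbit_bounded _ _)
  have hmemorb : matAct ((g : Matrix.orthogonalGroup (Fin n) ℝ) : Matrix (Fin n) (Fin n) ℝ) x
      ∈ orbitSet (Gj j) x := ⟨g, hgmem, rfl⟩
  have hlt : Metric.hausdorffDist (orbitSet (Gj j) x) (orbitSet G x) < ε / 3 :=
    lt_of_le_of_lt horbj (by linarith)
  obtain ⟨y, hy, hdy⟩ := Metric.exists_dist_lt_of_hausdorffDist_lt hmemorb hlt hfin2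
  refine ⟨y, hy, ?_⟩
  have htri := dist_triangle (matAct ((h : Matrix.orthogonalGroup (Fin n) ℝ) : Matrix (Fin n) (Fin n) ℝ) x)
    (matAct ((g : Matrix.orthogonalGroup (Fin n) ℝ) : Matrix (Fin n) (Fin n) ℝ) x) y
  rw [dist_comm (matAct ((h : Matrix.orthogonalGroup (Fin n) ℝ) : Matrix (Fin n) (Fin n) ℝ) x)
    (matAct ((g : Matrix.orthogonalGroup (Fin n) ℝ) : Matrix (Fin n) (Fin n) ℝ) x)] at htri
  linarith
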